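/- Let G be a finite simple locally bipartite graph with δ(G) > (6/11)·|G| that contains no copy of C̄₇, and let a₀, a₁, …, a₆ be distinct vertices of G forming a copy of H₂ (i.e. the map vᵢ ↦ aᵢ is an injective graph homomorphism from H₂ into G). Then the common neighbourhood Γ(a₅) ∩ Γ(a₀) ∩ Γ(a₂) has size at least 11·δ(G) − 6·|G| > 0; in particular there is a vertex u ∉ {a₀, …, a₆} adjacent to all of a₅, a₀ and a₂, so this copy of H₂ extends to a copy of H₂⁺. -/

import Mathlib

open SimpleGraph

/-- A finite simple graph is *locally bipartite* if each neighbourhood induces a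
bipartite (equivalently, 2-colourable) graph. -/
def LocallyBipartite {V : Type*} (G : SimpleGraph V) : Prop :=
  ∀ v : V, (G.induce (G.neighborSet v)).Colorable 2

/-- `C̄₇`, the complement of the 7-cycle: `i` and `j` are adjacent iff they differ by
`±2` or `±3` modulo 7. -/
def C7bar : SimpleGraph (ZMod 7) :=
  SimpleGraph.fromRel (fun i j => j = i + 2 ∨ j = i + 3)

/-- `H₀`, the Moser spindle: the 7-cycle `v₀v₁…v₆` together with the edges
`v₀v₂`, `v₀v₅`, `v₁v₃`, `v₄v₆`. -/
def H0 : SimpleGraph (ZMod 7) :=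
  SimpleGraph.fromRel (fun i j =>
    j = i + 1 ∨ (i = 0 ∧ j = 2) ∨ (i = 0 ∧ j = 5) ∨ (i = 1 ∧ j = 3) ∨ (i = 4 ∧ j = 6))

/-- `H₁`: the 7-cycle `v₀v₁…v₆` together with the edges
`v₃v₅`, `v₅v₀`, `v₀v₂`, `v₂v₄`, `v₆v₁`. -/
def H1 : SimpleGraph (ZMod 7) :=
  SimpleGraph.fromRel (fun i j =>
    j = i + 1 ∨ (i = 3 ∧ j = 5) ∨ (i = 5 ∧ j = 0) ∨ (i = 0 ∧ j = 2) ∨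
      (i = 2 ∧ j = 4) ∨ (i = 6 ∧ j = 1))

/-- `H₂`: the 7-cycle `v₀v₁…v₆` together with the edges
`v₁v₃`, `v₃v₅`, `v₅v₀`, `v₀v₂`, `v₂v₄`, `v₄v₆`. -/
def H2 : SimpleGraph (ZMod 7) :=
  SimpleGraph.fromRel (fun i j =>
    j = i + 1 ∨ (i = 1 ∧ j = 3) ∨ (i = 3 ∧ j = 5) ∨ (i = 5 ∧ j = 0) ∨
      (i = 0 ∧ j = 2) ∨ (i = 2 ∧ j = 4) ∨ (i = 4 ∧ j = 6))

/-- `H₂⁺`: the graph `H₂` (on the `some` vertices) together with an extra vertex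
(`none`) joined to exactly `v₀`, `v₂` and `v₅`. -/
def H2plus : SimpleGraph (Option (ZMod 7)) :=
  SimpleGraph.fromRel (fun a b =>
    match a, b with
    | some i, some j =>
        j = i + 1 ∨ (i = 1 ∧ j = 3) ∨ (i = 3 ∧ j = 5) ∨ (i = 5 ∧ j = 0) ∨
          (i = 0 ∧ j = 2) ∨ (i = 2 ∧ j = 4) ∨ (i = 4 ∧ j = 6)
    | none, some j => j = 0 ∨ j = 2 ∨ j = 5
    | _, _ => False)

/-- A graph `G` contains a copy of `H` if there is an injective graph homomorphism
from `H` to `G`, i.e. `G` has a (not necessarily induced) subgraph isomorphic to `H`. -/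
def ContainsCopy {W V : Type*} (H : SimpleGraph W) (G : SimpleGraph V) : Prop :=
  ∃ f : H →g G, Function.Injective f

/-- A pair of vertices `u, v` is *dense* if the common neighbourhood of `u` and `v`
contains an edge. -/
def DensePair {V : Type*} (G : SimpleGraph V) (u v : V) : Prop :=
  ∃ x y : V, G.Adj u x ∧ G.Adj v x ∧ G.Adj u y ∧ G.Adj v y ∧ G.Adj x y

/-- A pair of distinct vertices `u, v` is *sparse* if `u` and `v` are not adjacent and
the common neighbourhood of `u` and `v` contains no edge. -/
def SparsePair {V : Type*} (G : SimpleGraph V) (u v : V) : Prop :=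
  u ≠ v ∧ ¬ G.Adj u v ∧ ¬ DensePair G u v

/-- A set of vertices is independent if it contains no edge. -/
def IsIndepSet {V : Type*} (G : SimpleGraph V) (s : Set V) : Prop :=
  ∀ ⦃u⦄, u ∈ s → ∀ ⦃v⦄, v ∈ s → ¬ G.Adj u v


instance : DecidableRel H2.Adj := fun i j =>
  decidable_of_iff _ (SimpleGraph.fromRel_adj _ i j).symm

instance : DecidableRel C7bar.Adj := fun i j =>
  decidable_of_iff _ (SimpleGraph.fromRel_adj _ i j).symm

theorem fin2tri : ∀ p q r : Fin 2, p ≠ q → q ≠ r → p ≠ r → False := by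
  intro p q r h1 h2 h3
  have v1 : p.val ≠ q.val := fun h => h1 (Fin.ext h)
  have v2 : q.val ≠ r.val := fun h => h2 (Fin.ext h)
  have v3 : p.val ≠ r.val := fun h => h3 (Fin.ext h)
  have := p.isLt; have := q.isLt; have := r.isLt
  omega

theorem fin2pent : ∀ p q r s t : Fin 2, p ≠ q → q ≠ r → r ≠ s → s ≠ t → t ≠ p → False := by
  intro p q r s t h1 h2 h3 h4 h5
  have v1 : p.val ≠ q.val := fun h => h1 (Fin.ext h)
  have v2 : q.val ≠ r.val := fun h => h2 (Fin.ext h)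
  have v3 : r.val ≠ s.val := fun h => h3 (Fin.ext h)
  have v4 : s.val ≠ t.val := fun h => h4 (Fin.ext h)
  have v5 : t.val ≠ p.val := fun h => h5 (Fin.ext h)
  have := p.isLt; have := q.isLt; have := r.isLt; have := s.isLt; have := t.isLt
  omega

theorem boolkey : ∀ b0 b1 b2 b3 b4 b5 b6 : Bool,
    (b0 && b1 && b2) = false → (b1 && b2 && b3) = false → (b2 && b3 && b4) = false →
    (b3 && b4 && b5) = false → (b4 && b5 && b6) = false → (b5 && b6 && b0) = false →
    (b0 && b2 && b4) = false → (b0 && b3 && b5) = false → (b1 && b3 && b5) = false →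
    (b2 && b4 && b6) = false → (b0 && b1 && b3 && b4 && b6) = false →
    (b0 && b1 && b4 && b5) = false → (b0 && b2 && b3 && b6) = false →
    (cond b0 3 0) + (cond b1 1 0) + (cond b2 2 0) + (cond b3 1 0) + (cond b4 1 0) +
      (cond b5 2 0) + (cond b6 1 0) ≤ 6 + (cond (b5 && b0 && b2) 1 0) := by
  intro b0 b1 b2 b3 b4 b5 b6
  cases b0 <;> cases b1 <;> cases b2 <;> cases b3 <;> cases b4 <;> cases b5 <;> cases b6 <;>
    decide

/-- In a locally bipartite graph with minimum degree greater than `6/11·|G|` and no copy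
of `C̄₇`, any copy `a` of `H₂` extends: the common neighbourhood of `a₅, a₀, a₂` has size
at least `11·δ(G) − 6·|G| > 0`, and in particular there is a vertex outside the copy
adjacent to `a₅`, `a₀` and `a₂`, giving a copy of `H₂⁺`. -/
theorem copy_of_H2_extends_to_H2plus {V : Type} [Fintype V]
    (G : SimpleGraph V) [DecidableRel G.Adj]
    (hLB : LocallyBipartite G)
    (hdeg : (6 / 11 : ℝ) * (Fintype.card V : ℝ) < (G.minDegree : ℝ))
    (hC7 : ¬ ContainsCopy C7bar G)
    (a : ZMod 7 → V) (hinj : Function.Injective a)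
    (hcopy : ∀ i j : ZMod 7, H2.Adj i j → G.Adj (a i) (a j)) :
    11 * (G.minDegree : ℝ) - 6 * (Fintype.card V : ℝ) ≤
      ((G.neighborSet (a 5) ∩ G.neighborSet (a 0) ∩ G.neighborSet (a 2)).ncard : ℝ) ∧
    0 < (G.neighborSet (a 5) ∩ G.neighborSet (a 0) ∩ G.neighborSet (a 2)).ncard ∧
    ∃ u : V, u ∉ Set.range a ∧ G.Adj u (a 5) ∧ G.Adj u (a 0) ∧ G.Adj u (a 2) := by
  haveI : DecidableEq V := Classical.decEq V
  have E : ∀ i j : ZMod 7, H2.Adj i j → G.Adj (a i) (a j) := hcopy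
  -- no triangle inside a neighbourhood
  have tri : ∀ w x y z : V, G.Adj w x → G.Adj w y → G.Adj w z →
      G.Adj x y → G.Adj y z → G.Adj x z → False := by
    intro w x y z hwx hwy hwz hxy hyz hxz
    obtain ⟨C⟩ := hLB w
    have h1 := C.valid (show (G.induce (G.neighborSet w)).Adj ⟨x, hwx⟩ ⟨y, hwy⟩ from hxy)
    have h2 := C.valid (show (G.induce (G.neighborSet w)).Adj ⟨y, hwy⟩ ⟨z, hwz⟩ from hyz)
    have h3 := C.valid (show (G.induce (G.neighborSet w)).Adj ⟨x, hwx⟩ ⟨z, hwz⟩ from hxz)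
    exact fin2tri _ _ _ h1 h2 h3
  -- no 5-cycle inside a neighbourhood
  have pent : ∀ w x1 x2 x3 x4 x5 : V, G.Adj w x1 → G.Adj w x2 → G.Adj w x3 →
      G.Adj w x4 → G.Adj w x5 → G.Adj x1 x2 → G.Adj x2 x3 → G.Adj x3 x4 →
      G.Adj x4 x5 → G.Adj x5 x1 → False := by
    intro w x1 x2 x3 x4 x5 h1 h2 h3 h4 h5 e1 e2 e3 e4 e5
    obtain ⟨C⟩ := hLB w
    have c1 := C.valid (show (G.induce (G.neighborSet w)).Adj ⟨x1, h1⟩ ⟨x2, h2⟩ from e1)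
    have c2 := C.valid (show (G.induce (G.neighborSet w)).Adj ⟨x2, h2⟩ ⟨x3, h3⟩ from e2)
    have c3 := C.valid (show (G.induce (G.neighborSet w)).Adj ⟨x3, h3⟩ ⟨x4, h4⟩ from e3)
    have c4 := C.valid (show (G.induce (G.neighborSet w)).Adj ⟨x4, h4⟩ ⟨x5, h5⟩ from e4)
    have c5 := C.valid (show (G.induce (G.neighborSet w)).Adj ⟨x5, h5⟩ ⟨x1, h1⟩ from e5)
    exact fin2pent _ _ _ _ _ c1 c2 c3 c4 c5
  -- a copy of H₂ plus the extra edge 1-6 yields a copy of C̄₇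
  have hC7' : ∀ g : ZMod 7 → V, Function.Injective g →
      (∀ i j : ZMod 7, H2.Adj i j → G.Adj (g i) (g j)) → G.Adj (g 1) (g 6) → False := by
    intro g hg hhom h16
    apply hC7
    refine ⟨⟨fun k => g (3 * k), ?_⟩, ?_⟩
    · intro i j hij
      have key : ∀ i j : ZMod 7, C7bar.Adj i j →
          H2.Adj (3*i) (3*j) ∨ (3*i = 1 ∧ 3*j = 6) ∨ (3*i = 6 ∧ 3*j = 1) := by decide
      rcases key i j hij with h | ⟨h1, h2⟩ | ⟨h1, h2⟩
      · exact hhom _ _ h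
      · show G.Adj (g (3*i)) (g (3*j)); rw [h1, h2]; exact h16
      · show G.Adj (g (3*i)) (g (3*j)); rw [h1, h2]; exact h16.symm
    · exact hg.comp (by decide : Function.Injective (fun k : ZMod 7 => 3 * k))
  -- forbidden adjacency patterns (triangles)
  have L1 : ∀ v, G.Adj v (a 0) → G.Adj v (a 1) → G.Adj v (a 2) → False := fun v h0 h1 h2 =>
    tri v (a 0) (a 1) (a 2) h0 h1 h2 (E 0 1 (by decide)) (E 1 2 (by decide)) (E 0 2 (by decide))
  have L2 : ∀ v, G.Adj v (a 1) → G.Adj v (a 2) → G.Adj v (a 3) → False := fun v h1 h2 h3 =>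
    tri v (a 1) (a 2) (a 3) h1 h2 h3 (E 1 2 (by decide)) (E 2 3 (by decide)) (E 1 3 (by decide))
  have L3 : ∀ v, G.Adj v (a 2) → G.Adj v (a 3) → G.Adj v (a 4) → False := fun v h2 h3 h4 =>
    tri v (a 2) (a 3) (a 4) h2 h3 h4 (E 2 3 (by decide)) (E 3 4 (by decide)) (E 2 4 (by decide))
  have L4 : ∀ v, G.Adj v (a 3) → G.Adj v (a 4) → G.Adj v (a 5) → False := fun v h3 h4 h5 =>
    tri v (a 3) (a 4) (a 5) h3 h4 h5 (E 3 4 (by decide)) (E 4 5 (by decide)) (E 3 5 (by decide))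
  have L5 : ∀ v, G.Adj v (a 4) → G.Adj v (a 5) → G.Adj v (a 6) → False := fun v h4 h5 h6 =>
    tri v (a 4) (a 5) (a 6) h4 h5 h6 (E 4 5 (by decide)) (E 5 6 (by decide)) (E 4 6 (by decide))
  have L6 : ∀ v, G.Adj v (a 5) → G.Adj v (a 6) → G.Adj v (a 0) → False := fun v h5 h6 h0 =>
    tri v (a 5) (a 6) (a 0) h5 h6 h0 (E 5 6 (by decide)) (E 6 0 (by decide)) (E 5 0 (by decide))
  -- forbidden adjacency patterns (pentagons)
  have P7 : ∀ v, G.Adj v (a 0) → G.Adj v (a 2) → G.Adj v (a 4) → False := fun v h0 h2 h4 =>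
    pent (a 2) (a 0) (a 1) (a 3) (a 4) v (E 0 2 (by decide)).symm (E 1 2 (by decide)).symm
      (E 2 3 (by decide)) (E 2 4 (by decide)) h2.symm (E 0 1 (by decide)) (E 1 3 (by decide))
      (E 3 4 (by decide)) h4.symm h0
  have P8 : ∀ v, G.Adj v (a 0) → G.Adj v (a 3) → G.Adj v (a 5) → False := fun v h0 h3 h5 =>
    pent (a 5) (a 0) (a 6) (a 4) (a 3) v (E 5 0 (by decide)) (E 5 6 (by decide))
      (E 4 5 (by decide)).symm (E 3 5 (by decide)).symm h5.symm (E 6 0 (by decide)).symm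
      (E 4 6 (by decide)).symm (E 3 4 (by decide)).symm h3.symm h0
  have P9 : ∀ v, G.Adj v (a 1) → G.Adj v (a 3) → G.Adj v (a 5) → False := fun v h1 h3 h5 =>
    pent (a 3) (a 1) (a 2) (a 4) (a 5) v (E 1 3 (by decide)).symm (E 2 3 (by decide)).symm
      (E 3 4 (by decide)) (E 3 5 (by decide)) h3.symm (E 1 2 (by decide)) (E 2 4 (by decide))
      (E 4 5 (by decide)) h5.symm h1
  have P10 : ∀ v, G.Adj v (a 2) → G.Adj v (a 4) → G.Adj v (a 6) → False := fun v h2 h4 h6 =>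
    pent (a 4) (a 2) (a 3) (a 5) (a 6) v (E 2 4 (by decide)).symm (E 3 4 (by decide)).symm
      (E 4 5 (by decide)) (E 4 6 (by decide)) h4.symm (E 2 3 (by decide)) (E 3 5 (by decide))
      (E 5 6 (by decide)) h6.symm h2
  have P11 : ∀ v, G.Adj v (a 0) → G.Adj v (a 1) → G.Adj v (a 3) → G.Adj v (a 4) →
      G.Adj v (a 6) → False := fun v h0 h1 h3 h4 h6 =>
    pent v (a 0) (a 1) (a 3) (a 4) (a 6) h0 h1 h3 h4 h6 (E 0 1 (by decide))
      (E 1 3 (by decide)) (E 3 4 (by decide)) (E 4 6 (by decide)) (E 6 0 (by decide))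
  -- a5 ~ a2 is impossible
  have N52 : ¬ G.Adj (a 5) (a 2) := fun h =>
    pent (a 5) (a 3) (a 4) (a 6) (a 0) (a 2) (E 3 5 (by decide)).symm (E 4 5 (by decide)).symm
      (E 5 6 (by decide)) (E 5 0 (by decide)) h (E 3 4 (by decide)) (E 4 6 (by decide))
      (E 6 0 (by decide)) (E 0 2 (by decide)) (E 2 3 (by decide))
  -- a0 ~ a3 impossible
  have N03 : ¬ G.Adj (a 0) (a 3) := fun h =>
    tri (a 0) (a 1) (a 2) (a 3) (E 0 1 (by decide)) (E 0 2 (by decide)) h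
      (E 1 2 (by decide)) (E 2 3 (by decide)) (E 1 3 (by decide))
  -- a0 ~ a4 impossible
  have N04 : ¬ G.Adj (a 0) (a 4) := fun h =>
    tri (a 0) (a 4) (a 5) (a 6) h (E 5 0 (by decide)).symm (E 6 0 (by decide)).symm
      (E 4 5 (by decide)) (E 5 6 (by decide)) (E 4 6 (by decide))
  -- forbidden patterns via C̄₇
  have L12 : ∀ v, G.Adj v (a 0) → G.Adj v (a 1) → G.Adj v (a 4) → G.Adj v (a 5) → False := by
    intro v h0 h1 h4 h5
    by_cases hv2 : v = a 2
    · exact N52 (hv2 ▸ h5).symm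
    by_cases hv3 : v = a 3
    · exact N03 (hv3 ▸ h0).symm
    have hne : ∀ y : ZMod 7, y ≠ 6 → v ≠ a y := by
      have hy6 : ∀ y : ZMod 7, y ≠ 6 → y = 0 ∨ y = 1 ∨ y = 2 ∨ y = 3 ∨ y = 4 ∨ y = 5 := by
        decide
      intro y hy
      rcases hy6 y hy with rfl | rfl | rfl | rfl | rfl | rfl
      · exact h0.ne
      · exact h1.ne
      · exact hv2
      · exact hv3
      · exact h4.ne
      · exact h5.ne
    refine hC7' (fun k => if k = 6 then v else a k) ?_ ?_ ?_
    · intro x y hxy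
      have hxy' : (if x = 6 then v else a x) = (if y = 6 then v else a y) := hxy
      by_cases hx : x = 6 <;> by_cases hy : y = 6
      · rw [hx, hy]
      · rw [if_pos hx, if_neg hy] at hxy'; exact absurd hxy' (hne y hy)
      · rw [if_neg hx, if_pos hy] at hxy'; exact absurd hxy'.symm (hne x hx)
      · rw [if_neg hx, if_neg hy] at hxy'; exact hinj hxy'
    · intro i j hij
      show G.Adj (if i = 6 then v else a i) (if j = 6 then v else a j)
      by_cases hi : i = 6 <;> by_cases hj : j = 6
      · rw [hi, hj] at hij; exact absurd hij (by decide)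
      · subst hi
        rw [if_pos rfl, if_neg hj]
        have hca : j = 5 ∨ j = 0 ∨ j = 4 :=
          (by decide : ∀ j : ZMod 7, H2.Adj 6 j → j = 5 ∨ j = 0 ∨ j = 4) j hij
        rcases hca with rfl | rfl | rfl
        · exact h5
        · exact h0
        · exact h4
      · subst hj
        rw [if_neg hi, if_pos rfl]
        have hca : i = 5 ∨ i = 0 ∨ i = 4 :=
          (by decide : ∀ i : ZMod 7, H2.Adj i 6 → i = 5 ∨ i = 0 ∨ i = 4) i hij
        rcases hca with rfl | rfl | rfl
        · exact h5.symm
        · exact h0.symm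
        · exact h4.symm
      · rw [if_neg hi, if_neg hj]; exact E i j hij
    · show G.Adj (if (1 : ZMod 7) = 6 then v else a 1) (if (6 : ZMod 7) = 6 then v else a 6)
      rw [if_neg (by decide : (1 : ZMod 7) ≠ 6), if_pos rfl]; exact h1.symm
  have L13 : ∀ v, G.Adj v (a 0) → G.Adj v (a 2) → G.Adj v (a 3) → G.Adj v (a 6) → False := by
    intro v h0 h2 h3 h6
    by_cases hv4 : v = a 4
    · exact N04 (hv4 ▸ h0).symm
    by_cases hv5 : v = a 5
    · exact N52 (hv5 ▸ h2)
    have hne : ∀ y : ZMod 7, y ≠ 1 → v ≠ a y := by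
      have hy1 : ∀ y : ZMod 7, y ≠ 1 → y = 0 ∨ y = 2 ∨ y = 3 ∨ y = 4 ∨ y = 5 ∨ y = 6 := by
        decide
      intro y hy
      rcases hy1 y hy with rfl | rfl | rfl | rfl | rfl | rfl
      · exact h0.ne
      · exact h2.ne
      · exact h3.ne
      · exact hv4
      · exact hv5
      · exact h6.ne
    refine hC7' (fun k => if k = 1 then v else a k) ?_ ?_ ?_
    · intro x y hxy
      have hxy' : (if x = 1 then v else a x) = (if y = 1 then v else a y) := hxy
      by_cases hx : x = 1 <;> by_cases hy : y = 1
      · rw [hx, hy]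
      · rw [if_pos hx, if_neg hy] at hxy'; exact absurd hxy' (hne y hy)
      · rw [if_neg hx, if_pos hy] at hxy'; exact absurd hxy'.symm (hne x hx)
      · rw [if_neg hx, if_neg hy] at hxy'; exact hinj hxy'
    · intro i j hij
      show G.Adj (if i = 1 then v else a i) (if j = 1 then v else a j)
      by_cases hi : i = 1 <;> by_cases hj : j = 1
      · rw [hi, hj] at hij; exact absurd hij (by decide)
      · subst hi
        rw [if_pos rfl, if_neg hj]
        have hca : j = 0 ∨ j = 2 ∨ j = 3 :=
          (by decide : ∀ j : ZMod 7, H2.Adj 1 j → j = 0 ∨ j = 2 ∨ j = 3) j hij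
        rcases hca with rfl | rfl | rfl
        · exact h0
        · exact h2
        · exact h3
      · subst hj
        rw [if_neg hi, if_pos rfl]
        have hca : i = 0 ∨ i = 2 ∨ i = 3 :=
          (by decide : ∀ i : ZMod 7, H2.Adj i 1 → i = 0 ∨ i = 2 ∨ i = 3) i hij
        rcases hca with rfl | rfl | rfl
        · exact h0.symm
        · exact h2.symm
        · exact h3.symm
      · rw [if_neg hi, if_neg hj]; exact E i j hij
    · show G.Adj (if (1 : ZMod 7) = 1 then v else a 1) (if (6 : ZMod 7) = 1 then v else a 6)
      rw [if_pos rfl, if_neg (by decide : (6 : ZMod 7) ≠ 1)]; exact h6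
  -- the per-vertex weighted bound
  have key : ∀ v : V,
      (if G.Adj v (a 0) then 3 else 0) + (if G.Adj v (a 1) then 1 else 0) +
      (if G.Adj v (a 2) then 2 else 0) + (if G.Adj v (a 3) then 1 else 0) +
      (if G.Adj v (a 4) then 1 else 0) + (if G.Adj v (a 5) then 2 else 0) +
      (if G.Adj v (a 6) then 1 else 0) ≤
      6 + (if ((G.Adj v (a 5) ∧ G.Adj v (a 0)) ∧ G.Adj v (a 2)) then 1 else 0) := by
    intro v
    have hb := boolkey (decide (G.Adj v (a 0))) (decide (G.Adj v (a 1)))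
      (decide (G.Adj v (a 2))) (decide (G.Adj v (a 3))) (decide (G.Adj v (a 4)))
      (decide (G.Adj v (a 5))) (decide (G.Adj v (a 6)))
      (by simp only [← Bool.decide_and]; exact decide_eq_false fun h => L1 v h.1.1 h.1.2 h.2)
      (by simp only [← Bool.decide_and]; exact decide_eq_false fun h => L2 v h.1.1 h.1.2 h.2)
      (by simp only [← Bool.decide_and]; exact decide_eq_false fun h => L3 v h.1.1 h.1.2 h.2)
      (by simp only [← Bool.decide_and]; exact decide_eq_false fun h => L4 v h.1.1 h.1.2 h.2)
      (by simp only [← Bool.decide_and]; exact decide_eq_false fun h => L5 v h.1.1 h.1.2 h.2)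
      (by simp only [← Bool.decide_and]; exact decide_eq_false fun h => L6 v h.1.1 h.1.2 h.2)
      (by simp only [← Bool.decide_and]; exact decide_eq_false fun h => P7 v h.1.1 h.1.2 h.2)
      (by simp only [← Bool.decide_and]; exact decide_eq_false fun h => P8 v h.1.1 h.1.2 h.2)
      (by simp only [← Bool.decide_and]; exact decide_eq_false fun h => P9 v h.1.1 h.1.2 h.2)
      (by simp only [← Bool.decide_and]; exact decide_eq_false fun h => P10 v h.1.1 h.1.2 h.2)
      (by simp only [← Bool.decide_and]
          exact decide_eq_false fun h => P11 v h.1.1.1.1 h.1.1.1.2 h.1.1.2 h.1.2 h.2)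
      (by simp only [← Bool.decide_and]
          exact decide_eq_false fun h => L12 v h.1.1.1 h.1.1.2 h.1.2 h.2)
      (by simp only [← Bool.decide_and]
          exact decide_eq_false fun h => L13 v h.1.1.1 h.1.1.2 h.1.2 h.2)
    simpa only [← Bool.decide_and, Bool.cond_decide] using hb
  -- summing up
  set t : Finset V :=
    G.neighborFinset (a 5) ∩ G.neighborFinset (a 0) ∩ G.neighborFinset (a 2) with ht
  have hmem : ∀ v : V, v ∈ t ↔ ((G.Adj v (a 5) ∧ G.Adj v (a 0)) ∧ G.Adj v (a 2)) := by
    intro v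
    simp only [ht, Finset.mem_inter, SimpleGraph.mem_neighborFinset]
    constructor
    · rintro ⟨⟨hh1, hh2⟩, hh3⟩; exact ⟨⟨hh1.symm, hh2.symm⟩, hh3.symm⟩
    · rintro ⟨⟨hh1, hh2⟩, hh3⟩; exact ⟨⟨hh1.symm, hh2.symm⟩, hh3.symm⟩
  have hdegsum : ∀ (x : V) (c : ℕ), (∑ v : V, if G.Adj v x then c else 0) = c * G.degree x := by
    intro x c
    have hfil : (Finset.univ.filter fun v => G.Adj v x) = G.neighborFinset x := by
      ext w
      simp [SimpleGraph.mem_neighborFinset, G.adj_comm]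
    rw [← Finset.sum_filter, hfil, Finset.sum_const, smul_eq_mul]; exact mul_comm _ _
  have hsum : 11 * G.minDegree ≤ 6 * Fintype.card V + t.card := by
    have h1 : (∑ v : V, ((if G.Adj v (a 0) then 3 else 0) + (if G.Adj v (a 1) then 1 else 0) +
        (if G.Adj v (a 2) then 2 else 0) + (if G.Adj v (a 3) then 1 else 0) +
        (if G.Adj v (a 4) then 1 else 0) + (if G.Adj v (a 5) then 2 else 0) +
        (if G.Adj v (a 6) then 1 else 0))) ≤
        ∑ v : V, (6 + if v ∈ t then 1 else 0) := by
      refine Finset.sum_le_sum fun v _ => ?_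
      rw [if_congr (hmem v) rfl rfl]
      exact key v
    have h2 : (∑ v : V, ((if G.Adj v (a 0) then 3 else 0) + (if G.Adj v (a 1) then 1 else 0) +
        (if G.Adj v (a 2) then 2 else 0) + (if G.Adj v (a 3) then 1 else 0) +
        (if G.Adj v (a 4) then 1 else 0) + (if G.Adj v (a 5) then 2 else 0) +
        (if G.Adj v (a 6) then 1 else 0))) =
        3 * G.degree (a 0) + 1 * G.degree (a 1) + 2 * G.degree (a 2) + 1 * G.degree (a 3) +
          1 * G.degree (a 4) + 2 * G.degree (a 5) + 1 * G.degree (a 6) := by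
      rw [Finset.sum_add_distrib, Finset.sum_add_distrib, Finset.sum_add_distrib,
        Finset.sum_add_distrib, Finset.sum_add_distrib, Finset.sum_add_distrib,
        hdegsum, hdegsum, hdegsum, hdegsum, hdegsum, hdegsum, hdegsum]
    have h3 : (∑ v : V, (6 + if v ∈ t then 1 else 0)) = 6 * Fintype.card V + t.card := by
      rw [Finset.sum_add_distrib, Finset.sum_const, smul_eq_mul, Finset.card_univ,
        Finset.sum_ite_mem, Finset.univ_inter, Finset.sum_const, smul_eq_mul, mul_one,
        mul_comm]
    have d0 := G.minDegree_le_degree (a 0)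
    have d1 := G.minDegree_le_degree (a 1)
    have d2 := G.minDegree_le_degree (a 2)
    have d3 := G.minDegree_le_degree (a 3)
    have d4 := G.minDegree_le_degree (a 4)
    have d5 := G.minDegree_le_degree (a 5)
    have d6 := G.minDegree_le_degree (a 6)
    omega
  -- translating to the set statement
  have hset : G.neighborSet (a 5) ∩ G.neighborSet (a 0) ∩ G.neighborSet (a 2) = ↑t := by
    rw [ht, Finset.coe_inter, Finset.coe_inter, SimpleGraph.neighborFinset_def,
      SimpleGraph.neighborFinset_def, SimpleGraph.neighborFinset_def,
      Set.coe_toFinset, Set.coe_toFinset, Set.coe_toFinset]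
  have hncard : (G.neighborSet (a 5) ∩ G.neighborSet (a 0) ∩ G.neighborSet (a 2)).ncard =
      t.card := by rw [hset, Set.ncard_coe_finset]
  have hsumR : (11 : ℝ) * (G.minDegree : ℝ) ≤ 6 * (Fintype.card V : ℝ) + t.card := by
    exact_mod_cast hsum
  have hpos : 0 < t.card := by
    have hre : (0 : ℝ) < t.card := by linarith
    exact_mod_cast hre
  refine ⟨by rw [hncard]; linarith, by rw [hncard]; exact hpos, ?_⟩
  obtain ⟨u, hu⟩ := Finset.card_pos.mp hpos
  rw [ht, Finset.mem_inter, Finset.mem_inter, SimpleGraph.mem_neighborFinset,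
    SimpleGraph.mem_neighborFinset, SimpleGraph.mem_neighborFinset] at hu
  obtain ⟨⟨hu5, hu0⟩, hu2⟩ := hu
  refine ⟨u, ?_, hu5.symm, hu0.symm, hu2.symm⟩
  rintro ⟨j, hj⟩
  rw [← hj] at hu5 hu0 hu2
  have hcases : j = 0 ∨ j = 1 ∨ j = 2 ∨ j = 3 ∨ j = 4 ∨ j = 5 ∨ j = 6 :=
    (by decide : ∀ j : ZMod 7, j = 0 ∨ j = 1 ∨ j = 2 ∨ j = 3 ∨ j = 4 ∨ j = 5 ∨ j = 6) j
  rcases hcases with rfl | rfl | rfl | rfl | rfl | rfl | rfl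
  · exact G.loopless.irrefl _ hu0
  · exact pent (a 5) (a 4) (a 3) (a 1) (a 0) (a 6) (E 4 5 (by decide)).symm
      (E 3 5 (by decide)).symm hu5 (E 5 0 (by decide)) (E 5 6 (by decide))
      (E 3 4 (by decide)).symm (E 1 3 (by decide)).symm (E 0 1 (by decide)).symm
      (E 6 0 (by decide)).symm (E 4 6 (by decide)).symm
  · exact G.loopless.irrefl _ hu2
  · exact N03 hu0
  · exact N04 hu0
  · exact G.loopless.irrefl _ hu5
  · exact pent (a 2) (a 0) (a 1) (a 3) (a 4) (a 6) (E 0 2 (by decide)).symm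
      (E 1 2 (by decide)).symm (E 2 3 (by decide)) (E 2 4 (by decide)) hu2
      (E 0 1 (by decide)) (E 1 3 (by decide)) (E 3 4 (by decide)) (E 4 6 (by decide))
      (E 6 0 (by decide))
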